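/- Let m ≠ 0 and a₁, ..., aₙ, b be integers with gcd(a₁, ..., aₙ, m) dividing b. Let P₁ = |gcd(a₁, ..., aₙ, m)| · |m|^(n-1) and P₂ = ∏ᵢ |gcd(aᵢ, m)|. Then P₂ divides P₁, i.e., P₁ / P₂ is a positive integer. -/

import Mathlib

private lemma aux_prod_dvd {ι : Type*} [DecidableEq ι] (s : Finset ι) (hs : s.Nonempty)
    (d : ι → ℕ) (M : ℕ) (h : ∀ i ∈ s, d i ∣ M) :
    (∏ i ∈ s, d i) ∣ s.gcd d * M ^ (s.card - 1) := by
  induction hs using Finset.Nonempty.cons_induction with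
  | singleton i => simp [Finset.gcd_singleton]
  | cons i s hi hs ih =>
    rw [Finset.prod_cons, Finset.cons_eq_insert, Finset.gcd_insert, Finset.card_insert_of_notMem hi]
    have ih' := ih (fun j hj => h j (Finset.mem_cons_of_mem hj))
    have hdi : d i ∣ M := h i (Finset.mem_cons_self i s)
    have hlcm : Nat.lcm (d i) (s.gcd d) ∣ M := by
      obtain ⟨j, hj⟩ := hs
      exact Nat.lcm_dvd hdi ((Finset.gcd_dvd hj).trans (h j (Finset.mem_cons_of_mem hj)))
    calc d i * ∏ j ∈ s, d j ∣ d i * (s.gcd d * M ^ (s.card - 1)) :=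
          mul_dvd_mul_left _ ih'
      _ = (Nat.gcd (d i) (s.gcd d) * Nat.lcm (d i) (s.gcd d)) * M ^ (s.card - 1) := by
          rw [Nat.gcd_mul_lcm]; ring
      _ ∣ (Nat.gcd (d i) (s.gcd d) * M) * M ^ (s.card - 1) := by
          exact mul_dvd_mul_right (mul_dvd_mul_left _ hlcm) _
      _ = Nat.gcd (d i) (s.gcd d) * M ^ (s.card + 1 - 1) := by
          obtain ⟨j, hj⟩ := hs
          have : 1 ≤ s.card := Finset.card_pos.mpr ⟨j, hj⟩
          rw [Nat.add_sub_cancel, mul_assoc, ← pow_succ']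
          congr 2
          omega
      _ = GCDMonoid.gcd (d i) (s.gcd d) * M ^ (s.card + 1 - 1) := rfl

private lemma aux_gcd_eq {ι : Type*} [DecidableEq ι] (s : Finset ι) (hs : s.Nonempty)
    (a : ι → ℤ) (m : ℤ) :
    Int.gcd (s.gcd a) m = s.gcd (fun i => Int.gcd (a i) m) := by
  induction hs using Finset.Nonempty.cons_induction with
  | singleton i => simp [Int.gcd, ← Int.abs_eq_normalize, Int.natAbs_abs]
  | cons i s hi hs ih =>
    rw [Finset.cons_eq_insert, Finset.gcd_insert, Finset.gcd_insert, ← ih]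
    show Int.gcd (GCDMonoid.gcd (a i) (s.gcd a)) m = Nat.gcd (Int.gcd (a i) m) (Int.gcd (s.gcd a) m)
    rw [← Int.coe_gcd]
    simp only [Int.gcd, Int.natAbs_natCast]
    apply Nat.dvd_antisymm
    · exact Nat.dvd_gcd
        (Nat.dvd_gcd ((Nat.gcd_dvd_left _ _).trans (Nat.gcd_dvd_left _ _)) (Nat.gcd_dvd_right _ _))
        (Nat.dvd_gcd ((Nat.gcd_dvd_left _ _).trans (Nat.gcd_dvd_right _ _)) (Nat.gcd_dvd_right _ _))
    · exact Nat.dvd_gcd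
        (Nat.dvd_gcd ((Nat.gcd_dvd_left _ _).trans (Nat.gcd_dvd_left _ _))
          ((Nat.gcd_dvd_right _ _).trans (Nat.gcd_dvd_left _ _)))
        ((Nat.gcd_dvd_left _ _).trans (Nat.gcd_dvd_right _ _))

theorem stmt_12 (n : ℕ) (hn : 1 ≤ n) (a : Fin n → ℤ) (b m : ℤ) (hm : m ≠ 0)
    (hd : (Int.gcd (Finset.univ.gcd a) m : ℤ) ∣ b) :
    (∏ i, Int.gcd (a i) m) ∣ Int.gcd (Finset.univ.gcd a) m * m.natAbs ^ (n - 1) ∧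
    0 < (Int.gcd (Finset.univ.gcd a) m * m.natAbs ^ (n - 1)) / ∏ i, Int.gcd (a i) m := by
  have hne : (Finset.univ : Finset (Fin n)).Nonempty := by
    rw [Finset.univ_nonempty_iff]
    exact Fin.pos_iff_nonempty.mp hn
  have hdvd : (∏ i, Int.gcd (a i) m) ∣ Int.gcd (Finset.univ.gcd a) m * m.natAbs ^ (n - 1) := by
    classical
    rw [aux_gcd_eq _ hne]
    have := aux_prod_dvd Finset.univ hne (fun i => Int.gcd (a i) m) m.natAbs
      (fun i _ => Nat.gcd_dvd_right _ _)
    simpa using this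
  refine ⟨hdvd, ?_⟩
  have hP2 : 0 < ∏ i, Int.gcd (a i) m := by
    apply Finset.prod_pos
    intro i _
    exact Int.gcd_pos_of_ne_zero_right _ hm
  have hP1 : 0 < Int.gcd (Finset.univ.gcd a) m * m.natAbs ^ (n - 1) := by
    apply Nat.mul_pos (Int.gcd_pos_of_ne_zero_right _ hm)
    exact Nat.pow_pos (Int.natAbs_pos.mpr hm)
  exact Nat.div_pos (Nat.le_of_dvd hP1 hdvd) hP2
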